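/- If the independent set I is internally related to the basis B (I = B \ Y with Y ⊆ IA(B)), then I ∪ EP(I) = B ∪ EP(B) and I ∪ EA(I) = (B ∪ EA(B)) \ Y. Consequently, the facet F(I) of the augmented external activity complex is obtained from F(B) by replacing z_Y by y_Y. -/

import Mathlib

open Set

variable {α : Type*}

/-- A circuit of a matroid: a minimal dependent set. -/
def Matroid.Cct (M : Matroid α) (C : Set α) : Prop :=
  M.Dep C ∧ ∀ D ⊂ C, ¬ M.Dep D

/-- The externally active elements with respect to `S`: elements `e ∈ E \ S` that are the
maximum of some circuit contained in `S ∪ {e}`. -/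
def Matroid.exA [LinearOrder α] (M : Matroid α) (S : Set α) : Set α :=
  {e | e ∈ M.E \ S ∧ ∃ C, M.Cct C ∧ C ⊆ insert e S ∧ ∀ f ∈ C, f ≤ e}

/-- The externally passive elements with respect to `S`. -/
def Matroid.exP [LinearOrder α] (M : Matroid α) (S : Set α) : Set α :=
  (M.E \ S) \ M.exA S

/-- The internally active elements with respect to `S`: elements of `S` that are externally
active with respect to `E \ S` in the dual matroid. -/
def Matroid.inA [LinearOrder α] (M : Matroid α) (S : Set α) : Set α :=
  {i | i ∈ S ∧ i ∈ M✶.exA (M.E \ S)}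

/-- The internally passive elements with respect to `S`. -/
def Matroid.inP [LinearOrder α] (M : Matroid α) (S : Set α) : Set α :=
  S \ M.inA S

/-- `I` is internally related to the basis `B` if `I = B \ Y` for some `Y ⊆ IA(B)`. -/
def Matroid.IntRelated [LinearOrder α] (M : Matroid α) (I B : Set α) : Prop :=
  M.IsBase B ∧ ∃ Y ⊆ M.inA B, I = B \ Y

/-- The external/internal order on independent sets. -/
def Matroid.extIntLE [LinearOrder α] (M : Matroid α) (I J : Set α) : Prop :=
  ((∃ B, M.IntRelated I B ∧ M.IntRelated J B) ∧ I ⊆ J) ∨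
  ((¬ ∃ B, M.IntRelated I B ∧ M.IntRelated J B) ∧
    (I \ M.inA I) ∪ M.exA I ⊆ (J \ M.inA J) ∪ M.exA J)

/-- A circuit and a cocircuit meeting at `x` must meet in a second element. -/
lemma cct_inter_cocct {M : Matroid α} {C D : Set α} {x : α} (hC : M.Cct C) (hD : M✶.Cct D)
    (hxC : x ∈ C) (hxD : x ∈ D) : ∃ z, z ≠ x ∧ z ∈ C ∧ z ∈ D := by
  by_contra h
  push_neg at h
  have hinter : ∀ z ∈ C ∩ D, z = x := fun z hz => by
    by_contra hzx
    exact h z hzx hz.1 hz.2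
  have hCE : C ⊆ M.E := hC.1.subset_ground
  have hCx : M.Indep (C \ {x}) := by
    have : ¬ M.Dep (C \ {x}) := hC.2 _ (sdiff_singleton_ssubset.2 hxC)
    rwa [Matroid.not_dep_iff (diff_subset.trans hCE)] at this
  have hDx : M✶.Indep (D \ {x}) := by
    have : ¬ M✶.Dep (D \ {x}) := hD.2 _ (sdiff_singleton_ssubset.2 hxD)
    rwa [Matroid.not_dep_iff (diff_subset.trans hD.1.subset_ground)] at this
  obtain ⟨B₀, hB₀, hdisj⟩ := (Matroid.dual_indep_iff_exists'.1 hDx).2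
  obtain ⟨B₁, hB₁, hsub, hsub'⟩ := hCx.exists_isBase_subset_union_isBase hB₀
  have hmeet : (D ∩ B₁).Nonempty := (Matroid.dual_dep_iff_forall.1 hD.1).1 B₁ hB₁
  obtain ⟨z, hzD, hzB₁⟩ := hmeet
  have hz : z = x := by
    rcases hsub' hzB₁ with hz1 | hz1
    · exact absurd (hinter z ⟨hz1.1, hzD⟩) hz1.2
    · by_contra hne
      exact (hdisj.ne_of_mem ⟨hzD, hne⟩ hz1) rfl
  have hCB₁ : C ⊆ B₁ := by
    intro c hc
    rcases eq_or_ne c x with rfl | hcx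
    · exact hz ▸ hzB₁
    · exact hsub ⟨hc, hcx⟩
  exact hC.1.not_indep (hB₁.indep.subset hCB₁)

/-- Deleting internally active elements from a basis does not change external activity. -/
lemma exA_diff_eq [LinearOrder α] {M : Matroid α} {B Y : Set α} (hB : M.IsBase B)
    (hY : Y ⊆ M.inA B) : M.exA (B \ Y) = M.exA B := by
  ext e
  constructor
  · rintro ⟨⟨heE, heI⟩, C, hC, hCsub, hmax⟩
    have heB : e ∉ B := by
      intro heB
      have : C ⊆ B := fun c hc => by
        rcases hCsub hc with rfl | hc'
        · exact heB
        · exact hc'.1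
      exact hC.1.not_indep (hB.indep.subset this)
    exact ⟨⟨heE, heB⟩, C, hC, fun c hc => by
      rcases hCsub hc with rfl | hc'
      · exact mem_insert _ _
      · exact mem_insert_of_mem _ hc'.1, hmax⟩
  · rintro ⟨⟨heE, heB⟩, C, hC, hCsub, hmax⟩
    refine ⟨⟨heE, fun h => heB h.1⟩, C, hC, ?_, hmax⟩
    intro c hc
    rcases hCsub hc with rfl | hcB
    · exact mem_insert _ _
    refine mem_insert_of_mem _ ⟨hcB, fun hcY => ?_⟩
    obtain ⟨-, -, D, hD, hDsub, hmaxD⟩ := hY hcY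
    have hcD : c ∈ D := by
      by_contra hcD
      have hDsub' : D ⊆ M.E \ B := fun d hd =>
        (hDsub hd).resolve_left (by rintro rfl; exact hcD hd)
      refine hD.1.not_indep (Matroid.dual_indep_iff_exists'.2
        ⟨hDsub'.trans diff_subset, B, hB, Set.disjoint_left.2 fun {d} hd hdB => (hDsub' hd).2 hdB⟩)
    obtain ⟨z, hzc, hzC, hzD⟩ := cct_inter_cocct hC hD hc hcD
    have hze : z = e := by
      rcases hDsub hzD with rfl | hzEB
      · exact absurd rfl hzc
      rcases hCsub hzC with rfl | hzB
      · rfl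
      · exact absurd hzB hzEB.2
    subst hze
    have : z = c := le_antisymm (hmaxD z hzD) (hmax c hc)
    exact heB (this ▸ hcB)

/-- If `I = B \ Y` is internally related to `B` then `I ∪ EP(I) = B ∪ EP(B)` and
`I ∪ EA(I) = (B ∪ EA(B)) \ Y`; consequently the facet `F(I)` is obtained from `F(B)`
by replacing `z_Y` with `y_Y`. -/
theorem facet_of_internally_related [LinearOrder α] (M : Matroid α) [M.Finite]
    (B Y I : Set α) (hB : M.IsBase B) (hY : Y ⊆ M.inA B) (hI : I = B \ Y) :
    I ∪ M.exP I = B ∪ M.exP B ∧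
    I ∪ M.exA I = (B ∪ M.exA B) \ Y ∧
    ((I ∪ M.exP I) ×ˢ ({0} : Set (Fin 3))) ∪ (Y ×ˢ ({1} : Set (Fin 3))) ∪
        ((I ∪ M.exA I) ×ˢ ({2} : Set (Fin 3))) =
      ((((B ∪ M.exP B) ×ˢ ({0} : Set (Fin 3))) ∪
          ((B ∪ M.exA B) ×ˢ ({2} : Set (Fin 3)))) \ (Y ×ˢ ({2} : Set (Fin 3)))) ∪
        (Y ×ˢ ({1} : Set (Fin 3))) := by
  have hYB : Y ⊆ B := fun y hy => (hY hy).1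
  have hBE : B ⊆ M.E := hB.subset_ground
  have hA : M.exA I = M.exA B := hI ▸ exA_diff_eq hB hY
  have hAB : M.exA B ⊆ M.E \ B := fun e he => he.1
  -- S ∪ exP S = E \ exA S for S ⊆ E
  have key : ∀ S : Set α, S ⊆ M.E → S ∪ M.exP S = M.E \ M.exA S := by
    intro S hS
    ext x
    simp only [Matroid.exP, mem_union, mem_diff]
    constructor
    · rintro (hx | ⟨⟨hxE, hxS⟩, hxA⟩)
      · exact ⟨hS hx, fun hxA => hxA.1.2 hx⟩
      · exact ⟨hxE, hxA⟩
    · rintro ⟨hxE, hxA⟩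
      by_cases hxS : x ∈ S
      · exact Or.inl hxS
      · exact Or.inr ⟨⟨hxE, hxS⟩, hxA⟩
  have h1 : I ∪ M.exP I = B ∪ M.exP B := by
    rw [key I (hI ▸ diff_subset.trans hBE), key B hBE, hA]
  have h2 : I ∪ M.exA I = (B ∪ M.exA B) \ Y := by
    rw [hA, hI]
    ext x
    simp only [mem_union, mem_diff]
    constructor
    · rintro (⟨hxB, hxY⟩ | hxA)
      · exact ⟨Or.inl hxB, hxY⟩
      · exact ⟨Or.inr hxA, fun hxY => (hAB hxA).2 (hYB hxY)⟩
    · rintro ⟨hxB | hxA, hxY⟩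
      · exact Or.inl ⟨hxB, hxY⟩
      · exact Or.inr hxA
  refine ⟨h1, h2, ?_⟩
  rw [h1, h2]
  ext ⟨a, j⟩
  simp only [mem_union, mem_diff, Set.mem_prod, mem_singleton_iff]
  fin_cases j <;> simp
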